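/- Assume σ²γ̄ ≤ P_t·‖h‖² (so that problem (33) is feasible). Then problem (33) admits a rank-one optimal solution: there exists w ∈ ℂ^M such that R̄ = w w^H is feasible for problem (33) and b^H R̄ b ≥ b^H R b for every feasible R of problem (33). -/

import Mathlib

open Matrix Finset ComplexOrder

/-- The (real-valued) quadratic form `vᴴ R v` for a complex matrix `R`. -/
noncomputable def quadForm {M : ℕ} (R : Matrix (Fin M) (Fin M) ℂ) (v : Fin M → ℂ) : ℝ :=
  (star v ⬝ᵥ (R *ᵥ v)).re

/-- Squared Euclidean norm of a complex vector. -/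
noncomputable def normSqV {M : ℕ} (v : Fin M → ℂ) : ℝ :=
  ∑ i, Complex.normSq (v i)

/-- Feasibility for problem (33): `R` Hermitian PSD, `hᴴ R h ≥ σ²γ̄` and `tr R ≤ P_t`. -/
def Feasible33 {M : ℕ} (Pt σ γ : ℝ) (h : Fin M → ℂ)
    (R : Matrix (Fin M) (Fin M) ℂ) : Prop :=
  R.PosSemidef ∧ σ ^ 2 * γ ≤ quadForm R h ∧ (R.trace).re ≤ Pt

section Helpers

variable {M : ℕ}

noncomputable def toE (v : Fin M → ℂ) : EuclideanSpace ℂ (Fin M) := (WithLp.equiv 2 _).symm v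

lemma inner_toE (x y : Fin M → ℂ) : (inner ℂ (toE x) (toE y) : ℂ) = star x ⬝ᵥ y := by
  simp [toE, dotProduct, PiLp.inner_apply, mul_comm]

lemma toE_add (x y : Fin M → ℂ) : toE (x + y) = toE x + toE y := rfl

lemma toE_smul (z : ℂ) (x : Fin M → ℂ) : toE (z • x) = z • toE x := rfl

lemma normSqV_nonneg (v : Fin M → ℂ) : 0 ≤ normSqV v :=
  Finset.sum_nonneg fun _ _ => Complex.normSq_nonneg _

lemma normSqV_eq_norm_sq (v : Fin M → ℂ) : normSqV v = ‖toE v‖ ^ 2 := by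
  rw [EuclideanSpace.norm_eq, Real.sq_sqrt (Finset.sum_nonneg fun i _ => sq_nonneg _)]
  simp [normSqV, Complex.sq_norm, toE]

lemma star_dotProduct_self' (v : Fin M → ℂ) : star v ⬝ᵥ v = (normSqV v : ℂ) := by
  simp only [dotProduct, normSqV, Pi.star_apply, Complex.star_def,
    ← Complex.normSq_eq_conj_mul_self]
  push_cast
  rfl

lemma star_dotProduct_comm (x y : Fin M → ℂ) :
    star x ⬝ᵥ y = star (star y ⬝ᵥ x) := by
  simp only [dotProduct, star_sum, star_mul', star_star, Pi.star_apply]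
  exact Finset.sum_congr rfl fun j _ => mul_comm _ _

lemma normSqV_pos {v : Fin M → ℂ} (hv : v ≠ 0) : 0 < normSqV v := by
  rcases Function.ne_iff.mp hv with ⟨i, hi⟩
  have : 0 < Complex.normSq (v i) := Complex.normSq_pos.mpr hi
  exact lt_of_lt_of_le this (Finset.single_le_sum (f := fun i => Complex.normSq (v i))
    (fun j _ => Complex.normSq_nonneg _) (Finset.mem_univ i))

lemma normSqV_smul (z : ℂ) (v : Fin M → ℂ) :
    normSqV (z • v) = Complex.normSq z * normSqV v := by
  simp [normSqV, Complex.normSq_mul, Finset.mul_sum]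

lemma quadForm_factor (A : Matrix (Fin M) (Fin M) ℂ) (v : Fin M → ℂ) :
    quadForm (Aᴴ * A) v = normSqV (A *ᵥ v) := by
  rw [quadForm, ← mulVec_mulVec, dotProduct_mulVec, ← star_mulVec, star_dotProduct_self']
  simp

lemma trace_factor (A : Matrix (Fin M) (Fin M) ℂ) :
    ((Aᴴ * A).trace).re = ∑ k, normSqV (A k) := by
  rw [trace]
  simp only [diag_apply, mul_apply, conjTranspose_apply]
  simp only [Complex.re_sum]
  rw [Finset.sum_comm]
  congr 1; ext k
  rw [normSqV]
  congr 1; ext i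
  simp [← Complex.normSq_eq_conj_mul_self]

lemma quadForm_vecMulVec (w v : Fin M → ℂ) :
    quadForm (vecMulVec w (star w)) v = Complex.normSq (star v ⬝ᵥ w) := by
  have h1 : (vecMulVec w (star w)) *ᵥ v = (star w ⬝ᵥ v) • w := by
    ext i
    simp only [vecMulVec_apply, mulVec, dotProduct, Pi.smul_apply, smul_eq_mul,
      Finset.sum_mul]
    exact Finset.sum_congr rfl fun j _ => by ring
  rw [quadForm, h1]
  rw [star_dotProduct_comm w v, dotProduct_smul, smul_eq_mul, Complex.star_def,
    ← Complex.normSq_eq_conj_mul_self, Complex.ofReal_re]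

lemma psd_vecMulVec (w : Fin M → ℂ) : (vecMulVec w (star w)).PosSemidef := by
  have : vecMulVec w (star w) = (replicateRow Unit (star w))ᴴ * (replicateRow Unit (star w)) := by
    rw [vecMulVec_eq Unit]
    congr 1
    ext i j
    simp [replicateRow, replicateCol]
  rw [this]
  exact posSemidef_conjTranspose_mul_self _

lemma trace_vecMulVec (w : Fin M → ℂ) :
    ((vecMulVec w (star w)).trace).re = normSqV w := by
  rw [trace]
  simp only [diag_apply, vecMulVec_apply, Pi.star_apply]
  rw [Complex.re_sum, normSqV]
  congr 1; ext i
  simp [Complex.mul_conj]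

lemma mulVec_apply_inner (A : Matrix (Fin M) (Fin M) ℂ) (v : Fin M → ℂ) (k : Fin M) :
    (A *ᵥ v) k = inner ℂ (toE (star (A k))) (toE v) := by
  rw [inner_toE]
  simp [mulVec, dotProduct]

lemma normSqV_mulVec_eq (A : Matrix (Fin M) (Fin M) ℂ) (v : Fin M → ℂ) :
    normSqV (A *ᵥ v) = ∑ k, ‖(inner ℂ (toE (star (A k))) (toE v) : ℂ)‖ ^ 2 := by
  rw [normSqV]
  refine Finset.sum_congr rfl fun k _ => ?_
  rw [mulVec_apply_inner, ← Complex.sq_norm]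

lemma csRows (A : Matrix (Fin M) (Fin M) ℂ) (v : Fin M → ℂ) :
    normSqV (A *ᵥ v) ≤ normSqV v * ∑ k, normSqV (A k) := by
  rw [normSqV_mulVec_eq, Finset.mul_sum]
  refine Finset.sum_le_sum fun k _ => ?_
  have := norm_inner_le_norm (𝕜 := ℂ) (toE (star (A k))) (toE v)
  calc ‖(inner ℂ (toE (star (A k))) (toE v) : ℂ)‖ ^ 2
      ≤ (‖toE (star (A k))‖ * ‖toE v‖) ^ 2 := by
        exact pow_le_pow_left₀ (norm_nonneg _) this 2
    _ = normSqV v * normSqV (star (A k)) := by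
        rw [mul_pow, normSqV_eq_norm_sq, normSqV_eq_norm_sq]; ring
    _ = normSqV v * normSqV (A k) := by
        congr 1
        simp [normSqV]

lemma bessel2 (A : Matrix (Fin M) (Fin M) ℂ) {e1 e2 : Fin M → ℂ}
    (h1 : normSqV e1 = 1) (h2 : normSqV e2 = 1) (h12 : star e1 ⬝ᵥ e2 = 0) :
    normSqV (A *ᵥ e1) + normSqV (A *ᵥ e2) ≤ ∑ k, normSqV (A k) := by
  have i12 : (inner ℂ (toE e1) (toE e2) : ℂ) = 0 := by rw [inner_toE, h12]
  have horth : Orthonormal ℂ (![toE e1, toE e2]) := by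
    rw [orthonormal_iff_ite]
    intro i j
    fin_cases i <;> fin_cases j <;>
      simp only [Matrix.cons_val_zero, Matrix.cons_val_one, Matrix.head_cons,
        Fin.mk_zero, Fin.mk_one, if_true, if_false]
    · rw [inner_toE, star_dotProduct_self', h1]; norm_num
    · rw [if_neg (by decide), i12]
    · rw [if_neg (by decide), ← inner_conj_symm, i12, map_zero]
    · rw [inner_toE, star_dotProduct_self', h2]; norm_num
  have key : ∀ k : Fin M,
      ‖(inner ℂ (toE (star (A k))) (toE e1) : ℂ)‖ ^ 2
        + ‖(inner ℂ (toE (star (A k))) (toE e2) : ℂ)‖ ^ 2 ≤ normSqV (A k) := by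
    intro k
    have hb := horth.sum_inner_products_le (s := Finset.univ) (toE (star (A k)))
    rw [Fin.sum_univ_two] at hb
    simp only [Matrix.cons_val_zero, Matrix.cons_val_one, Matrix.head_cons] at hb
    rw [norm_inner_symm (toE (star (A k))) (toE e1),
      norm_inner_symm (toE (star (A k))) (toE e2)]
    refine le_trans hb ?_
    rw [← normSqV_eq_norm_sq]
    have : normSqV (star (A k)) = normSqV (A k) := by simp [normSqV]
    rw [this]
  rw [normSqV_mulVec_eq, normSqV_mulVec_eq, ← Finset.sum_add_distrib]
  exact Finset.sum_le_sum fun k _ => key k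

lemma key2D {a C t u x y Pt : ℝ} (ha : 0 ≤ a) (hC : 0 ≤ C) (ht : 0 ≤ t) (hu : 0 ≤ u)
    (hx : t ≤ x) (hy : 0 ≤ y) (hcirc : t ^ 2 + u ^ 2 = Pt) (hcon : x ^ 2 + y ^ 2 ≤ Pt)
    (hcase : u * a ≤ t * C) : a * x + C * y ≤ a * t + C * u := by
  have huy : y ≤ u := by nlinarith
  have h1 : 0 ≤ (u ^ 2 - y ^ 2) - (x ^ 2 - t ^ 2) := by nlinarith
  rcases eq_or_lt_of_le (add_nonneg hu hy) with h0 | h0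
  · have hu0 : u = 0 := by linarith
    have hy0 : y = 0 := by linarith
    have hxt : x = t := by nlinarith
    rw [hu0, hy0, hxt]
  · nlinarith [mul_nonneg (mul_nonneg hC (sub_nonneg.mpr hx)) (sub_nonneg.mpr hx),
      mul_nonneg (mul_nonneg ha (sub_nonneg.mpr hx)) (sub_nonneg.mpr huy),
      mul_le_mul_of_nonneg_right hcase (sub_nonneg.mpr hx),
      mul_nonneg hC h1]

lemma psd_factor {R : Matrix (Fin M) (Fin M) ℂ} (hR : R.PosSemidef) :
    ∃ A : Matrix (Fin M) (Fin M) ℂ, R = Aᴴ * A := by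
  open MatrixOrder in
  obtain ⟨A, rfl⟩ := CStarAlgebra.nonneg_iff_eq_star_mul_self.mp hR.nonneg
  exact ⟨A, rfl⟩

end Helpers

set_option maxHeartbeats 1000000 in
/-- If `σ²γ̄ ≤ P_t ‖h‖²`, then problem (33) admits a rank-one optimal solution
`R̄ = w wᴴ`. -/
theorem stmt_5 {M : ℕ} (hM : 1 ≤ M) (h b : Fin M → ℂ) (hh : h ≠ 0) (hb : b ≠ 0)
    (Pt σ γ : ℝ) (hPt : 0 < Pt) (hσ : 0 < σ) (hγ : 0 ≤ γ)
    (hfeas : σ ^ 2 * γ ≤ Pt * normSqV h) :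
    ∃ w : Fin M → ℂ, Feasible33 Pt σ γ h (vecMulVec w (star w)) ∧
      ∀ R : Matrix (Fin M) (Fin M) ℂ, Feasible33 Pt σ γ h R →
        quadForm R b ≤ quadForm (vecMulVec w (star w)) b := by
  classical
  set s : ℝ := σ ^ 2 * γ with hs_def
  have hs : 0 ≤ s := by positivity
  set H : ℝ := normSqV h with hH_def
  set B : ℝ := normSqV b with hB_def
  have hH : 0 < H := normSqV_pos hh
  have hB : 0 < B := normSqV_pos hb
  set c : ℂ := star h ⬝ᵥ b with hc_def
  set nc : ℝ := ‖c‖ with hnc_def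
  have hnc : 0 ≤ nc := norm_nonneg c
  have hncsq : Complex.normSq c = nc ^ 2 := (Complex.sq_norm c).symm
  have dH : star h ⬝ᵥ h = (H : ℂ) := star_dotProduct_self' h
  have dB : star b ⬝ᵥ b = (B : ℂ) := star_dotProduct_self' b
  by_cases hsplit : s * B ≤ Pt * nc ^ 2
  · -- Case I : w = sqrt(Pt/B) • b
    refine ⟨((Real.sqrt (Pt / B) : ℝ) : ℂ) • b, ?_, ?_⟩
    · have hPtB : (0:ℝ) ≤ Pt / B := by positivity
      have hsq : Real.sqrt (Pt / B) ^ 2 = Pt / B := Real.sq_sqrt hPtB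
      refine ⟨psd_vecMulVec _, ?_, ?_⟩
      · rw [quadForm_vecMulVec]
        have : star h ⬝ᵥ (((Real.sqrt (Pt / B) : ℝ) : ℂ) • b)
            = ((Real.sqrt (Pt / B) : ℝ) : ℂ) * c := by
          rw [dotProduct_smul, smul_eq_mul]
        rw [this, Complex.normSq_mul, Complex.normSq_ofReal, hncsq, ← sq, hsq]
        rw [div_mul_eq_mul_div, le_div_iff₀ hB, ← hs_def]
        linarith
      · rw [_root_.trace_vecMulVec, normSqV_smul, Complex.normSq_ofReal, ← sq, hsq,
          div_mul_cancel₀ _ hB.ne']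
    · intro R hR
      obtain ⟨A, rfl⟩ := psd_factor hR.1
      have htr := hR.2.2
      rw [trace_factor] at htr
      have hval : quadForm (vecMulVec (((Real.sqrt (Pt / B) : ℝ) : ℂ) • b)
          (star (((Real.sqrt (Pt / B) : ℝ) : ℂ) • b))) b = Pt * B := by
        rw [quadForm_vecMulVec, dotProduct_smul, smul_eq_mul, dB,
          Complex.normSq_mul, Complex.normSq_ofReal, ← sq,
          Real.sq_sqrt (by positivity : (0:ℝ) ≤ Pt / B), Complex.normSq_ofReal, ← sq]
        field_simp
      rw [hval, quadForm_factor]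
      calc normSqV (A *ᵥ b) ≤ B * ∑ k, normSqV (A k) := csRows A b
        _ ≤ B * Pt := by
            exact mul_le_mul_of_nonneg_left htr hB.le
        _ = Pt * B := mul_comm _ _
  ·
    -- Case II
    have hlt : Pt * nc ^ 2 < s * B := not_le.mp hsplit
    have hs0 : 0 < s := by
      have h1 : 0 < s * B := lt_of_le_of_lt (by positivity) hlt
      rcases mul_pos_iff.mp h1 with ⟨h2, _⟩ | ⟨_, h3⟩
      · exact h2
      · exact absurd hB (not_lt.mpr h3.le)
    have hHc : ((H : ℝ) : ℂ) ≠ 0 := Complex.ofReal_ne_zero.mpr hH.ne'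
    set p : Fin M → ℂ := b - (c / (H : ℂ)) • h with hp_def
    have dhp : star h ⬝ᵥ p = 0 := by
      rw [hp_def, dotProduct_sub, dotProduct_smul, dH, smul_eq_mul, ← hc_def]
      field_simp
      ring
    have dph : star p ⬝ᵥ h = 0 := by rw [star_dotProduct_comm, dhp, star_zero]
    have dbh : star b ⬝ᵥ h = (starRingEnd ℂ) c := by
      rw [star_dotProduct_comm, ← hc_def]; rfl
    set P2 : ℝ := B - nc ^ 2 / H with hP2_def
    have hcconj : (c / (H : ℂ)) * (starRingEnd ℂ) c = ((nc ^ 2 / H : ℝ) : ℂ) := by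
      rw [div_mul_eq_mul_div, Complex.mul_conj, hncsq]
      push_cast
      ring
    have dbp : star b ⬝ᵥ p = (P2 : ℂ) := by
      rw [hp_def, dotProduct_sub, dotProduct_smul, dB, dbh, smul_eq_mul, hcconj, hP2_def]
      push_cast
      ring
    have dpb : star p ⬝ᵥ b = (P2 : ℂ) := by
      rw [star_dotProduct_comm, dbp, Complex.star_def, Complex.conj_ofReal]
    have dpp : star p ⬝ᵥ p = (P2 : ℂ) := by
      nth_rewrite 2 [hp_def]
      rw [dotProduct_sub, dotProduct_smul, dpb, dph, smul_eq_mul, mul_zero, sub_zero]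
    have hP2 : normSqV p = P2 :=
      Complex.ofReal_injective (by rw [← star_dotProduct_self', dpp])
    have hP2nn : 0 ≤ P2 := hP2 ▸ normSqV_nonneg p
    have hHP2 : H * P2 = H * B - nc ^ 2 := by
      rw [hP2_def]; field_simp
    have hP2pos : 0 < P2 := by
      rcases hP2nn.lt_or_eq with hlt2 | heq
      · exact hlt2
      · exfalso
        have e0 : H * P2 = 0 := by rw [← heq, mul_zero]
        have e2 : H * B = nc ^ 2 := by linarith only [hHP2, e0]
        have e1 : s * B ≤ Pt * H * B := mul_le_mul_of_nonneg_right hfeas hB.le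
        have e3 : Pt * H * B = Pt * nc ^ 2 := by rw [mul_assoc, e2]
        linarith only [e1, e3, hlt]
    have hP2c : ((P2 : ℝ) : ℂ) ≠ 0 := Complex.ofReal_ne_zero.mpr hP2pos.ne'
    have hsH : s / H ≤ Pt := (div_le_iff₀ hH).mpr (by linarith)
    set rH : ℝ := Real.sqrt H with hrH_def
    have hrH : 0 < rH := Real.sqrt_pos.mpr hH
    have hrH2 : rH ^ 2 = H := Real.sq_sqrt hH.le
    set rP : ℝ := Real.sqrt P2 with hrP_def
    have hrP : 0 < rP := Real.sqrt_pos.mpr hP2pos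
    have hrP2 : rP ^ 2 = P2 := Real.sq_sqrt hP2nn
    set t : ℝ := Real.sqrt (s / H) with ht_def
    have ht0 : 0 ≤ t := Real.sqrt_nonneg _
    have ht2 : t ^ 2 = s / H := Real.sq_sqrt (by positivity)
    set u : ℝ := Real.sqrt (Pt - s / H) with hu_def
    have hu0 : 0 ≤ u := Real.sqrt_nonneg _
    have hu2 : u ^ 2 = Pt - s / H := Real.sq_sqrt (by linarith)
    set aa : ℝ := nc / rH with haa_def
    have haa0 : 0 ≤ aa := by positivity
    have haa2 : aa ^ 2 = nc ^ 2 / H := by rw [haa_def, div_pow, hrH2]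
    set φ : ℂ := if c = 0 then (1 : ℂ) else c / (nc : ℂ) with hφ_def
    have hφc : φ * (starRingEnd ℂ) c = (nc : ℂ) := by
      by_cases hc0 : c = 0
      · simp [hφ_def, hc0, hnc_def]
      · have hncne : (nc : ℂ) ≠ 0 := by
          simp only [ne_eq, Complex.ofReal_eq_zero, hnc_def]
          exact norm_ne_zero_iff.mpr hc0
        rw [hφ_def, if_neg hc0, div_mul_eq_mul_div, Complex.mul_conj, hncsq]
        push_cast
        rw [sq, mul_div_assoc, div_self hncne, mul_one]
    have hφn : Complex.normSq φ = 1 := by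
      by_cases hc0 : c = 0
      · simp [hφ_def, hc0]
      · have hncne : nc ≠ 0 := norm_ne_zero_iff.mpr hc0
        rw [hφ_def, if_neg hc0, Complex.normSq_div, Complex.normSq_ofReal, hncsq]
        field_simp
    set α : ℂ := ((t / rH : ℝ) : ℂ) * φ with hα_def
    set β : ℂ := ((u / rP : ℝ) : ℂ) with hβ_def
    have hαn : Complex.normSq α = t ^ 2 / H := by
      rw [hα_def, Complex.normSq_mul, hφn, Complex.normSq_ofReal, mul_one, ← sq,
        div_pow, hrH2]
    have hβn : Complex.normSq β = u ^ 2 / P2 := by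
      rw [hβ_def, Complex.normSq_ofReal, ← sq, div_pow, hrP2]
    have dhw : star h ⬝ᵥ (α • h + β • p) = α * (H : ℂ) := by
      rw [dotProduct_add, dotProduct_smul, dotProduct_smul, dH, dhp, smul_eq_mul,
        smul_eq_mul, mul_zero, add_zero]
    have hre : t / rH * nc + u / rP * P2 = aa * t + rP * u := by
      rw [haa_def, ← hrP2]; field_simp
    have dbw : star b ⬝ᵥ (α • h + β • p) = ((aa * t + rP * u : ℝ) : ℂ) := by
      rw [dotProduct_add, dotProduct_smul, dotProduct_smul, dbh, dbp, smul_eq_mul,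
        smul_eq_mul, hα_def, mul_assoc, hφc, hβ_def, ← hre]
      push_cast
      ring
    have conj_mul' : ∀ z : ℂ, star z * z = ((Complex.normSq z : ℝ) : ℂ) := fun z => by
      rw [Complex.star_def]
      exact (Complex.normSq_eq_conj_mul_self).symm
    have dww : star (α • h + β • p) ⬝ᵥ (α • h + β • p) = ((t ^ 2 + u ^ 2 : ℝ) : ℂ) := by
      have h2 : star p ⬝ᵥ (α • h + β • p) = β * (P2 : ℂ) := by
        rw [dotProduct_add, dotProduct_smul, dotProduct_smul, dph, dpp, smul_eq_mul,
          smul_eq_mul, mul_zero, zero_add]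
      rw [star_add, star_smul, star_smul, add_dotProduct, smul_dotProduct,
        smul_dotProduct, dhw, h2, smul_eq_mul, smul_eq_mul,
        show star α * (α * (H : ℂ)) = (star α * α) * (H : ℂ) from
          (mul_assoc _ _ _).symm,
        show star β * (β * (P2 : ℂ)) = (star β * β) * (P2 : ℂ) from
          (mul_assoc _ _ _).symm,
        conj_mul' α, conj_mul' β, hαn, hβn]
      have hre2 : t ^ 2 / H * H + u ^ 2 / P2 * P2 = t ^ 2 + u ^ 2 := by
        field_simp
      rw [← Complex.ofReal_mul, ← Complex.ofReal_mul, ← Complex.ofReal_add, hre2]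
    have hwPt : normSqV (α • h + β • p) = t ^ 2 + u ^ 2 :=
      Complex.ofReal_injective (by rw [← star_dotProduct_self', dww])
    refine ⟨α • h + β • p, ⟨psd_vecMulVec _, ?_, ?_⟩, ?_⟩
    · rw [quadForm_vecMulVec, dhw, Complex.normSq_mul, hαn, Complex.normSq_ofReal,
        ← sq, ht2, ← hs_def]
      have heq : s / H / H * H ^ 2 = s := by
        rw [sq]
        field_simp
      rw [heq]
    · rw [_root_.trace_vecMulVec, hwPt, ht2, hu2]
      linarith
    · -- optimality
      intro R hR
      obtain ⟨A, rfl⟩ := psd_factor hR.1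
      have htr := hR.2.2
      rw [trace_factor] at htr
      have hcon := hR.2.1
      rw [quadForm_factor, ← hs_def] at hcon
      set e1 : Fin M → ℂ := ((rH : ℝ) : ℂ)⁻¹ • h with he1_def
      set e2 : Fin M → ℂ := ((rP : ℝ) : ℂ)⁻¹ • p with he2_def
      have hrHne : ((rH : ℝ) : ℂ) ≠ 0 := Complex.ofReal_ne_zero.mpr hrH.ne'
      have hrPne : ((rP : ℝ) : ℂ) ≠ 0 := Complex.ofReal_ne_zero.mpr hrP.ne'
      have he1 : normSqV e1 = 1 := by
        rw [he1_def, normSqV_smul, Complex.normSq_inv, Complex.normSq_ofReal, ← sq,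
          hrH2, ← hH_def, inv_mul_cancel₀ hH.ne']
      have he2 : normSqV e2 = 1 := by
        rw [he2_def, normSqV_smul, Complex.normSq_inv, Complex.normSq_ofReal, ← sq,
          hrP2, hP2, inv_mul_cancel₀ hP2pos.ne']
      have he12 : star e1 ⬝ᵥ e2 = 0 := by
        rw [he1_def, he2_def, star_smul, smul_dotProduct, dotProduct_smul, dhp]
        simp
      set x : ℝ := ‖toE (A *ᵥ e1)‖ with hx_def
      set y : ℝ := ‖toE (A *ᵥ e2)‖ with hy_def
      have hx0 : 0 ≤ x := norm_nonneg _
      have hy0 : 0 ≤ y := norm_nonneg _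
      have hxsq : normSqV (A *ᵥ e1) = x ^ 2 := by rw [normSqV_eq_norm_sq]
      have hysq : normSqV (A *ᵥ e2) = y ^ 2 := by rw [normSqV_eq_norm_sq]
      have hxy : x ^ 2 + y ^ 2 ≤ Pt := by
        have hbes := bessel2 A he1 he2 he12
        rw [hxsq, hysq] at hbes
        linarith
      have hh_e1 : h = ((rH : ℝ) : ℂ) • e1 := by
        rw [he1_def, smul_smul, mul_inv_cancel₀ hrHne, one_smul]
      have hp_e2 : p = ((rP : ℝ) : ℂ) • e2 := by
        rw [he2_def, smul_smul, mul_inv_cancel₀ hrPne, one_smul]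
      have hAh : A *ᵥ h = ((rH : ℝ) : ℂ) • (A *ᵥ e1) := by
        nth_rewrite 1 [hh_e1]
        rw [mulVec_smul]
      have htx : t ≤ x := by
        have h1 : normSqV (A *ᵥ h) = H * x ^ 2 := by
          rw [hAh, normSqV_smul, Complex.normSq_ofReal, ← sq, hrH2, hxsq]
        rw [h1] at hcon
        have h2 : s / H ≤ x ^ 2 := (div_le_iff₀ hH).mpr (by linarith)
        calc t ≤ Real.sqrt (x ^ 2) := Real.sqrt_le_sqrt h2
          _ = x := Real.sqrt_sq hx0
      have hb_dec : b = (c / (H : ℂ)) • h + p := by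
        rw [hp_def]; abel
      have hAp : A *ᵥ p = ((rP : ℝ) : ℂ) • (A *ᵥ e2) := by
        nth_rewrite 1 [hp_e2]
        exact mulVec_smul A _ e2
      have hAb : A *ᵥ b = ((c / (H : ℂ)) * ((rH : ℝ) : ℂ)) • (A *ᵥ e1)
          + ((rP : ℝ) : ℂ) • (A *ᵥ e2) := by
        nth_rewrite 1 [hb_dec]
        rw [mulVec_add, mulVec_smul A (c / (H : ℂ)) h, hAh, hAp, smul_smul]
      have hn1 : ‖(c / (H : ℂ)) * ((rH : ℝ) : ℂ)‖ = aa := by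
        rw [norm_mul, norm_div]
        rw [← hnc_def, Complex.norm_of_nonneg hH.le, Complex.norm_of_nonneg hrH.le,
          haa_def, div_mul_eq_mul_div, ← hrH2, sq]
        field_simp
      have hn2 : ‖((rP : ℝ) : ℂ)‖ = rP := by
        rw [Complex.norm_real, Real.norm_of_nonneg hrP.le]
      have hnormb : ‖toE (A *ᵥ b)‖ ≤ aa * x + rP * y := by
        rw [hAb, toE_add, toE_smul, toE_smul]
        refine le_trans (norm_add_le _ _) ?_
        rw [norm_smul, norm_smul, hn1, hn2]
      have hkey : (Pt - s / H) * nc ^ 2 ≤ s * P2 := by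
        have e1 : s * P2 = s * B - s / H * nc ^ 2 := by rw [hP2_def]; ring
        have e2 : (Pt - s / H) * nc ^ 2 = Pt * nc ^ 2 - s / H * nc ^ 2 := by ring
        linarith only [e1, e2, hlt.le]
      have hua : u * aa ≤ t * rP := by
        have h1 : (u * aa) ^ 2 ≤ (t * rP) ^ 2 := by
          calc (u * aa) ^ 2 = ((Pt - s / H) * nc ^ 2) / H := by
                rw [mul_pow, hu2, haa2]; ring
            _ ≤ (s * P2) / H := div_le_div_of_nonneg_right hkey hH.le
            _ = (t * rP) ^ 2 := by rw [mul_pow, ht2, hrP2]; ring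
        calc u * aa = Real.sqrt ((u * aa) ^ 2) :=
              (Real.sqrt_sq (mul_nonneg hu0 haa0)).symm
          _ ≤ Real.sqrt ((t * rP) ^ 2) := Real.sqrt_le_sqrt h1
          _ = t * rP := Real.sqrt_sq (mul_nonneg ht0 hrP.le)
      have h2d : aa * x + rP * y ≤ aa * t + rP * u :=
        key2D haa0 hrP.le ht0 hu0 htx hy0 (by rw [ht2, hu2]; ring) hxy hua
      have hval : quadForm (vecMulVec (α • h + β • p) (star (α • h + β • p))) b
          = (aa * t + rP * u) ^ 2 := by
        rw [quadForm_vecMulVec, dbw, Complex.normSq_ofReal, sq]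
      rw [quadForm_factor, hval]
      calc normSqV (A *ᵥ b) = ‖toE (A *ᵥ b)‖ ^ 2 := normSqV_eq_norm_sq _
        _ ≤ (aa * x + rP * y) ^ 2 :=
            pow_le_pow_left₀ (norm_nonneg _) hnormb 2
        _ ≤ (aa * t + rP * u) ^ 2 :=
            pow_le_pow_left₀ (by positivity) h2d 2
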